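/- arXiv:1610.04550 — 2 statements merged into one kernel-verified Lean document; each statement's English description precedes it below -/
import Mathlib

section
/- Consider the discrete-time linear system x[t+1] = A x[t] + B w[t] on ℝ^n with fixed initial state x̄₀, where A is invertible and w[0], w[1], … are i.i.d. with a log-concave probability density ψ_w on ℝ^p. Then for every τ ≥ 1, the topological support of the distribution of the random state x[τ] is a convex subset of ℝ^n. -/
open MeasureTheory Matrix ProbabilityTheory

/-- A nonnegative function on `ℝ^m` is log-concave if
`f(λx + (1−λ)y) ≥ f(x)^λ f(y)^{1−λ}` for all `x, y` and `λ ∈ [0,1]`. -/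
def LogConcaveFun {m : ℕ} (f : (Fin m → ℝ) → ℝ) : Prop :=
  ∀ x y : Fin m → ℝ, ∀ l : ℝ, 0 ≤ l → l ≤ 1 →
    f x ^ l * f y ^ (1 - l) ≤ f (l • x + (1 - l) • y)

/-- Topological support of a measure: the set of points all of whose open
neighbourhoods have positive measure (equivalently, the smallest closed set
of full measure for a Borel probability measure on `ℝⁿ`). -/
def measSupport {E : Type*} [TopologicalSpace E] [MeasurableSpace E] (μ : Measure E) : Set E :=
  {x | ∀ U : Set E, IsOpen U → x ∈ U → 0 < μ U}

section Aux

open Set Pointwise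

lemma isOpen_compl_measSupport {E : Type*} [TopologicalSpace E] [MeasurableSpace E]
    (μ : Measure E) : IsOpen (measSupport μ)ᶜ := by
  rw [isOpen_iff_forall_mem_open]
  intro x hx
  simp only [measSupport, mem_compl_iff, mem_setOf_eq, not_forall] at hx
  obtain ⟨U, hU, hxU, hμU⟩ := hx
  refine ⟨U, fun y hy => ?_, hU, hxU⟩
  simp only [measSupport, mem_compl_iff, mem_setOf_eq, not_forall]
  exact ⟨U, hU, hy, hμU⟩

lemma isClosed_measSupport {E : Type*} [TopologicalSpace E] [MeasurableSpace E]
    (μ : Measure E) : IsClosed (measSupport μ) := by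
  simpa using (isOpen_compl_measSupport μ).isClosed_compl

lemma measSupport_compl_null {E : Type*} [TopologicalSpace E] [MeasurableSpace E]
    [SecondCountableTopology E] (μ : Measure E) : μ (measSupport μ)ᶜ = 0 := by
  apply measure_null_of_locally_null
  intro x hx
  simp only [measSupport, mem_compl_iff, mem_setOf_eq, not_forall] at hx
  obtain ⟨U, hU, hxU, hμU⟩ := hx
  exact ⟨U, mem_nhdsWithin_of_mem_nhds (hU.mem_nhds hxU),
    by simpa [pos_iff_ne_zero] using hμU⟩

lemma measSupport_map {E F : Type*} [TopologicalSpace E] [MeasurableSpace E]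
    [SecondCountableTopology E] [TopologicalSpace F] [MeasurableSpace F]
    [OpensMeasurableSpace F]
    (μ : Measure E) {f : E → F} (hf : Continuous f) (hfm : Measurable f) :
    measSupport (Measure.map f μ) = closure (f '' measSupport μ) := by
  apply Subset.antisymm
  · intro y hy
    by_contra hyc
    have hU : IsOpen (closure (f '' measSupport μ))ᶜ := isClosed_closure.isOpen_compl
    have h1 : 0 < Measure.map f μ (closure (f '' measSupport μ))ᶜ := hy _ hU hyc
    rw [Measure.map_apply hfm hU.measurableSet] at h1
    have h2 : f ⁻¹' (closure (f '' measSupport μ))ᶜ ⊆ (measSupport μ)ᶜ := by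
      intro z hz hzs
      exact hz (subset_closure (mem_image_of_mem f hzs))
    exact absurd (measure_mono_null h2 (measSupport_compl_null μ)) h1.ne'
  · refine closure_minimal ?_ (isClosed_measSupport _)
    rintro _ ⟨z, hz, rfl⟩ U hU hzU
    rw [Measure.map_apply hfm hU.measurableSet]
    exact hz _ (hU.preimage hf) hzU

lemma measSupport_pi {ι : Type*} [Fintype ι] [DecidableEq ι] {E : ι → Type*}
    [∀ i, TopologicalSpace (E i)] [∀ i, MeasurableSpace (E i)]
    [∀ i, OpensMeasurableSpace (E i)]
    (μ : ∀ i, Measure (E i)) [∀ i, IsProbabilityMeasure (μ i)] :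
    measSupport (Measure.pi μ) = Set.pi Set.univ fun i => measSupport (μ i) := by
  apply Subset.antisymm
  · intro v hv i _
    intro U hU hvU
    have hcyl : IsOpen (Function.eval i ⁻¹' U) := hU.preimage (continuous_apply i)
    have h1 : 0 < Measure.pi μ (Function.eval i ⁻¹' U) := hv _ hcyl hvU
    have h2 : Function.eval i ⁻¹' U
        = Set.pi univ (Function.update (fun j => (univ : Set (E j))) i U) := by
      ext z
      simp only [mem_preimage, Set.mem_pi, mem_univ, forall_true_left, Function.eval]
      constructor
      · intro hz j
        rcases eq_or_ne j i with rfl | hj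
        · rwa [Function.update_self]
        · rw [Function.update_of_ne hj]; trivial
      · intro hz; have := hz i; rwa [Function.update_self] at this
    rw [h2, Measure.pi_pi] at h1
    have h3 : ∏ j, μ j (Function.update (fun j => (univ : Set (E j))) i U j) = μ i U := by
      rw [Fintype.prod_eq_single i]
      · rw [Function.update_self]
      · intro j hj
        rw [Function.update_of_ne hj]
        exact measure_univ
    rwa [h3] at h1
  · intro v hv U hU hvU
    obtain ⟨u, hu, hsub⟩ := isOpen_pi_iff'.mp hU v hvU
    have : 0 < Measure.pi μ (Set.pi univ u) := by
      rw [Measure.pi_pi]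
      exact CanonicallyOrderedAdd.prod_pos.mpr fun i _ =>
        hv i (mem_univ i) _ (hu i).1 (hu i).2
    exact this.trans_le (measure_mono hsub)

lemma logConcave_levelSet_convex {m : ℕ} {ψ : (Fin m → ℝ) → ℝ}
    (h0 : ∀ z, 0 ≤ ψ z) (hlc : LogConcaveFun ψ) (c : ℝ) (hc : 0 ≤ c) :
    Convex ℝ {z | c < ψ z} := by
  intro u hu v hv la lb hla hlb hab
  simp only [mem_setOf_eq] at hu hv ⊢
  set d := min (ψ u) (ψ v) with hd
  have hdpos : 0 < d := lt_min (hc.trans_lt hu) (hc.trans_lt hv)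
  have h1 : ψ u ^ la * ψ v ^ lb ≤ ψ (la • u + lb • v) := by
    have := hlc u v la hla (by linarith)
    rwa [show (1:ℝ) - la = lb by linarith] at this
  have h2 : d ^ la * d ^ lb ≤ ψ u ^ la * ψ v ^ lb :=
    mul_le_mul (Real.rpow_le_rpow hdpos.le (min_le_left _ _) hla)
      (Real.rpow_le_rpow hdpos.le (min_le_right _ _) hlb)
      (Real.rpow_nonneg hdpos.le _) (Real.rpow_nonneg (h0 u) _)
  have h3 : d ^ la * d ^ lb = d := by
    rw [← Real.rpow_add hdpos, hab, Real.rpow_one]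
  calc c < d := lt_min hu hv
    _ = d ^ la * d ^ lb := h3.symm
    _ ≤ ψ u ^ la * ψ v ^ lb := h2
    _ ≤ ψ (la • u + lb • v) := h1

lemma logConcave_support_convex {m : ℕ} {ψ : (Fin m → ℝ) → ℝ}
    (h0 : ∀ z, 0 ≤ ψ z) (hlc : LogConcaveFun ψ) :
    Convex ℝ (measSupport ((volume : Measure (Fin m → ℝ)).withDensity
      fun z => ENNReal.ofReal (ψ z))) := by
  set μ := (volume : Measure (Fin m → ℝ)).withDensity fun z => ENNReal.ofReal (ψ z) with hμ
  set C : Set (Fin m → ℝ) := {z | 0 < ψ z} with hC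
  set Ck : ℕ → Set (Fin m → ℝ) := fun k => {z | ((k : ℝ) + 1)⁻¹ < ψ z} with hCk
  have hCconv : Convex ℝ C := logConcave_levelSet_convex h0 hlc 0 le_rfl
  have hCkconv : ∀ k, Convex ℝ (Ck k) := fun k =>
    logConcave_levelSet_convex h0 hlc _ (by positivity)
  have hCunion : C = ⋃ k, Ck k := by
    ext z
    simp only [hC, hCk, mem_setOf_eq, mem_iUnion]
    constructor
    · intro hz
      obtain ⟨k, hk⟩ := exists_nat_gt (ψ z)⁻¹
      refine ⟨k, ?_⟩
      have h1 : (ψ z)⁻¹ < (k : ℝ) + 1 := hk.trans (lt_add_one _)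
      calc ((k : ℝ) + 1)⁻¹ < ((ψ z)⁻¹)⁻¹ := by
            apply inv_strictAnti₀ (inv_pos.mpr hz) h1
        _ = ψ z := inv_inv _
    · rintro ⟨k, hk⟩
      exact lt_trans (by positivity) hk
  have claim2 : ∀ (V : Set (Fin m → ℝ)), MeasurableSet V → ∀ k : ℕ,
      0 < volume (V ∩ Ck k) → 0 < μ V := by
    intro V hV k hpos
    have hnm : NullMeasurableSet (V ∩ Ck k) volume :=
      hV.nullMeasurableSet.inter ((hCkconv k).nullMeasurableSet _)
    rw [hμ, withDensity_apply _ hV]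
    have step1 : ∫⁻ z in V ∩ Ck k, ENNReal.ofReal (ψ z) ≤ ∫⁻ z in V, ENNReal.ofReal (ψ z) :=
      lintegral_mono' (Measure.restrict_mono Set.inter_subset_left le_rfl) le_rfl
    have step2 : ENNReal.ofReal (((k : ℝ) + 1)⁻¹) * volume (V ∩ Ck k)
        ≤ ∫⁻ z in V ∩ Ck k, ENNReal.ofReal (ψ z) := by
      rw [← setLIntegral_const]
      refine lintegral_mono_ae ?_
      filter_upwards [ae_restrict_mem₀ hnm] with z hz
      exact ENNReal.ofReal_le_ofReal hz.2.le
    have hfac : 0 < ENNReal.ofReal (((k : ℝ) + 1)⁻¹) := by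
      rw [ENNReal.ofReal_pos]; positivity
    exact lt_of_lt_of_le (lt_of_lt_of_le (ENNReal.mul_pos hfac.ne' hpos.ne') step2) step1
  have claim1 : ∀ (V : Set (Fin m → ℝ)), MeasurableSet V → 0 < μ V →
      0 < volume (V ∩ C) := by
    intro V hV hpos
    by_contra hz
    push_neg at hz
    have hz0 : volume (V ∩ C) = 0 := le_antisymm (by simpa using hz) bot_le
    have hres : volume.restrict V C = 0 := by
      rw [Measure.restrict_apply' hV, Set.inter_comm]; exact hz0
    have hae : (fun z => ENNReal.ofReal (ψ z)) =ᵐ[volume.restrict V] 0 := by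
      have hsub : {z | ENNReal.ofReal (ψ z) ≠ 0} ⊆ C := by
        intro z hz'
        simp only [mem_setOf_eq, ne_eq, ENNReal.ofReal_eq_zero, not_le] at hz'
        exact hz'
      exact measure_mono_null hsub hres
    rw [hμ, withDensity_apply _ hV, lintegral_congr_ae hae] at hpos
    simp at hpos
  have claim1' : ∀ (V : Set (Fin m → ℝ)), 0 < volume (V ∩ C) →
      ∃ k, 0 < volume (V ∩ Ck k) := by
    intro V hpos
    by_contra hz
    push_neg at hz
    have : volume (V ∩ C) = 0 := by
      rw [hCunion, Set.inter_iUnion]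
      exact measure_iUnion_null fun k => le_antisymm (by simpa using hz k) bot_le
    exact absurd this hpos.ne'
  intro a ha b hb la lb hla hlb hab
  rcases eq_or_lt_of_le hla with hla0 | hlapos
  · have : lb = 1 := by linarith
    simpa [← hla0, this] using hb
  rcases eq_or_lt_of_le hlb with hlb0 | hlbpos
  · have : la = 1 := by linarith
    simpa [← hlb0, this] using ha
  intro U hU hmU
  obtain ⟨ε, hε, hball⟩ := Metric.isOpen_iff.mp hU _ hmU
  have hSa : 0 < μ (Metric.ball a ε) := ha _ Metric.isOpen_ball (Metric.mem_ball_self hε)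
  have hSb : 0 < μ (Metric.ball b ε) := hb _ Metric.isOpen_ball (Metric.mem_ball_self hε)
  obtain ⟨k₁, hk₁⟩ := claim1' _ (claim1 _ measurableSet_ball hSa)
  have hTvol : 0 < volume (Metric.ball b ε ∩ C) := claim1 _ measurableSet_ball hSb
  obtain ⟨t₀, ht₀⟩ := nonempty_of_measure_ne_zero hTvol.ne'
  set S := Metric.ball a ε ∩ Ck k₁ with hS
  set g : (Fin m → ℝ) → (Fin m → ℝ) := fun s => la • s + lb • t₀ with hg
  have himg : g '' S = (lb • t₀) +ᵥ (la • S) := by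
    ext z
    simp only [hg, mem_image, Set.mem_vadd_set, Set.mem_smul_set, vadd_eq_add]
    constructor
    · rintro ⟨s, hs, rfl⟩; exact ⟨la • s, ⟨s, hs, rfl⟩, by abel⟩
    · rintro ⟨_, ⟨s, hs, rfl⟩, rfl⟩; exact ⟨s, hs, by abel⟩
  have hvolimg : 0 < volume (g '' S) := by
    rw [himg, measure_vadd]
    rw [Measure.addHaar_smul_of_nonneg _ hla]
    refine ENNReal.mul_pos ?_ hk₁.ne'
    simp only [ne_eq, ENNReal.ofReal_eq_zero, not_le]
    positivity
  have hsub : g '' S ⊆ Metric.ball (la • a + lb • b) ε ∩ C := by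
    rintro _ ⟨s, hs, rfl⟩
    constructor
    · rw [Metric.mem_ball, dist_eq_norm]
      have heq : la • s + lb • t₀ - (la • a + lb • b) = la • (s - a) + lb • (t₀ - b) := by
        module
      rw [heq]
      calc ‖la • (s - a) + lb • (t₀ - b)‖ ≤ ‖la • (s - a)‖ + ‖lb • (t₀ - b)‖ := norm_add_le _ _
        _ = la * ‖s - a‖ + lb * ‖t₀ - b‖ := by
            rw [norm_smul, norm_smul, Real.norm_of_nonneg hla, Real.norm_of_nonneg hlb]
        _ < la * ε + lb * ε := by
            apply add_lt_add
            · exact mul_lt_mul_of_pos_left (by rw [← dist_eq_norm]; exact hs.1) hlapos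
            · exact mul_lt_mul_of_pos_left (by rw [← dist_eq_norm]; exact ht₀.1) hlbpos
        _ = ε := by rw [← add_mul, hab, one_mul]
    · have h2 : ((k₁ : ℝ) + 1)⁻¹ < ψ s := hs.2
      have hsC : s ∈ C := show 0 < ψ s from lt_trans (by positivity) h2
      exact hCconv hsC ht₀.2 hla hlb hab
  have hvol2 : 0 < volume (Metric.ball (la • a + lb • b) ε ∩ C) :=
    hvolimg.trans_le (measure_mono hsub)
  obtain ⟨k, hk⟩ := claim1' _ hvol2
  exact (claim2 _ measurableSet_ball k hk).trans_le (measure_mono hball)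

lemma state_formula {n p : ℕ} (A : Matrix (Fin n) (Fin n) ℝ) (B : Matrix (Fin n) (Fin p) ℝ)
    (x0 : Fin n → ℝ) {Ω : Type*} (w : ℕ → Ω → (Fin p → ℝ)) (x : ℕ → Ω → (Fin n → ℝ))
    (hx0 : ∀ ω, x 0 ω = x0)
    (hxrec : ∀ t ω, x (t + 1) ω = A *ᵥ x t ω + B *ᵥ w t ω) :
    ∀ t ω, x t ω = (A ^ t) *ᵥ x0 + ∑ i : Fin t, ((A ^ (t - 1 - (i : ℕ)) * B) *ᵥ w i ω) := by
  intro t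
  induction t with
  | zero => intro ω; simp [hx0, Matrix.one_mulVec]
  | succ t ih =>
    intro ω
    rw [hxrec, ih ω, Matrix.mulVec_add]
    have hAsum : A *ᵥ (∑ i : Fin t, ((A ^ (t - 1 - (i : ℕ)) * B) *ᵥ w i ω))
        = ∑ i : Fin t, ((A ^ (t - (i : ℕ)) * B) *ᵥ w i ω) := by
      have hmap := map_sum (Matrix.mulVecLin A)
        (fun i : Fin t => ((A ^ (t - 1 - (i : ℕ)) * B) *ᵥ w i ω)) Finset.univ
      simp only [Matrix.mulVecLin_apply] at hmap
      rw [hmap]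
      refine Finset.sum_congr rfl fun i _ => ?_
      rw [Matrix.mulVec_mulVec, ← Matrix.mul_assoc, ← pow_succ']
      have hi := i.isLt
      have hexp : t - 1 - (i : ℕ) + 1 = t - (i : ℕ) := by omega
      rw [hexp]
    rw [hAsum, Fin.sum_univ_castSucc]
    simp only [Fin.coe_castSucc, Fin.val_last]
    have hlast : (A ^ (t + 1 - 1 - t) * B) *ᵥ w t ω = B *ᵥ w t ω := by
      have : t + 1 - 1 - t = 0 := by omega
      rw [this, pow_zero, Matrix.one_mul]
    have hexp : ∀ i : Fin t, t + 1 - 1 - (i : ℕ) = t - (i : ℕ) := fun i => by omega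
    have hcast : ∑ i : Fin t, ((A ^ (t + 1 - 1 - (i : ℕ)) * B) *ᵥ w i ω)
        = ∑ i : Fin t, ((A ^ (t - (i : ℕ)) * B) *ᵥ w i ω) :=
      Finset.sum_congr rfl fun i _ => by rw [hexp i]
    rw [hlast, hcast, Matrix.mulVec_mulVec, ← pow_succ']
    abel

lemma joint_law_pi {Ω : Type*} [MeasurableSpace Ω] (P : Measure Ω) [IsProbabilityMeasure P]
    {p : ℕ} (w : ℕ → Ω → (Fin p → ℝ)) (hwmeas : ∀ t, Measurable (w t))
    (hwindep : iIndepFun w P)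
    (ν : Measure (Fin p → ℝ)) [IsProbabilityMeasure ν]
    (hwdens : ∀ t, Measure.map (w t) P = ν) (τ : ℕ) :
    Measure.map (fun ω (i : Fin τ) => w i ω) P = Measure.pi (fun _ : Fin τ => ν) := by
  have hW : Measurable (fun ω (i : Fin τ) => w i ω) :=
    measurable_pi_lambda _ fun i => hwmeas i
  refine (Measure.pi_eq fun s hs => ?_).symm
  rw [Measure.map_apply hW (MeasurableSet.univ_pi hs)]
  have hpre : (fun ω (i : Fin τ) => w i ω) ⁻¹' (Set.pi Set.univ s)
      = ⋂ i : Fin τ, w i ⁻¹' s i := by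
    ext ω; simp [Set.mem_pi]
  rw [hpre]
  set T : Finset ℕ := Finset.image Fin.val (Finset.univ : Finset (Fin τ)) with hT
  set s' : ℕ → Set Ω := fun j => if h : j < τ then w j ⁻¹' s ⟨j, h⟩ else Set.univ with hs'
  have h1 : (⋂ i : Fin τ, w i ⁻¹' s i) = ⋂ j ∈ T, s' j := by
    ext ω
    simp only [mem_iInter, hT, Finset.mem_image, Finset.mem_univ, true_and]
    constructor
    · rintro h j ⟨i, rfl⟩
      simp only [hs', i.isLt, dif_pos, Fin.eta]
      exact h i
    · intro h i
      have := h i.val ⟨i, rfl⟩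
      simpa only [hs', i.isLt, dif_pos, Fin.eta] using this
  rw [h1, hwindep.meas_biInter ?_]
  · rw [Finset.prod_image (by intro a _ b _ h; exact Fin.val_injective h)]
    refine Finset.prod_congr rfl fun i _ => ?_
    simp only [hs', i.isLt, dif_pos, Fin.eta]
    rw [← Measure.map_apply (hwmeas i) (hs i), hwdens]
  · intro j hj
    simp only [hT, Finset.mem_image, Finset.mem_univ, true_and] at hj
    obtain ⟨i, rfl⟩ := hj
    exact ⟨s i, hs i, by simp only [hs', i.isLt, dif_pos, Fin.eta]⟩

end Aux

/-- **Convexity of the forward stochastic reach set.**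
For the system `x[t+1] = A x[t] + B w[t]` with invertible `A`, initial state
`x̄₀`, and i.i.d. disturbances with a log-concave density `ψw`, the topological
support of the distribution of `x[τ]` is convex for every `τ ≥ 1`. -/
theorem fsr_set_convex
    {Ω : Type*} [MeasurableSpace Ω] (P : Measure Ω) [IsProbabilityMeasure P]
    (n p : ℕ)
    (A : Matrix (Fin n) (Fin n) ℝ) (hA : IsUnit A.det)
    (B : Matrix (Fin n) (Fin p) ℝ)
    (x0 : Fin n → ℝ)
    (w : ℕ → Ω → (Fin p → ℝ))
    (hwmeas : ∀ t, Measurable (w t))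
    (hwindep : iIndepFun w P)
    (ψw : (Fin p → ℝ) → ℝ)
    (hψw0 : ∀ z, 0 ≤ ψw z)
    (hψwlc : LogConcaveFun ψw)
    (hwdens : ∀ t, Measure.map (w t) P
        = (volume : Measure (Fin p → ℝ)).withDensity (fun z => ENNReal.ofReal (ψw z)))
    (x : ℕ → Ω → (Fin n → ℝ))
    (hx0 : ∀ ω, x 0 ω = x0)
    (hxrec : ∀ t ω, x (t + 1) ω = A *ᵥ x t ω + B *ᵥ w t ω) :
    ∀ τ : ℕ, 1 ≤ τ → Convex ℝ (measSupport (Measure.map (x τ) P)) := by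
  intro τ _
  set μw := (volume : Measure (Fin p → ℝ)).withDensity (fun z => ENNReal.ofReal (ψw z)) with hμw
  haveI : IsProbabilityMeasure μw := by
    rw [← hwdens 0]
    exact Measure.isProbabilityMeasure_map (hwmeas 0).aemeasurable
  have hW : Measurable (fun ω (i : Fin τ) => w i ω) :=
    measurable_pi_lambda _ fun i => hwmeas i
  have hpi : Measure.map (fun ω (i : Fin τ) => w i ω) P = Measure.pi (fun _ : Fin τ => μw) :=
    joint_law_pi P w hwmeas hwindep μw hwdens τ
  set f : (Fin τ → Fin p → ℝ) → (Fin n → ℝ) :=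
    fun v => (A ^ τ) *ᵥ x0 + ∑ i : Fin τ, ((A ^ (τ - 1 - (i : ℕ)) * B) *ᵥ v i) with hf
  have hfc : Continuous f := by
    refine continuous_const.add (continuous_finset_sum _ fun i _ => ?_)
    exact ((A ^ (τ - 1 - (i : ℕ)) * B).mulVecLin.continuous_of_finiteDimensional).comp
      (continuous_apply i)
  have hfm : Measurable f := hfc.measurable
  have hxτ : x τ = f ∘ (fun ω (i : Fin τ) => w i ω) := by
    funext ω
    rw [state_formula A B x0 w x hx0 hxrec τ ω]
    rfl
  rw [hxτ, ← Measure.map_map hfm hW, hpi, measSupport_map _ hfc hfm, measSupport_pi]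
  apply Convex.closure
  have hsupp : Convex ℝ (Set.pi Set.univ fun _ : Fin τ => measSupport μw) :=
    convex_pi fun i _ => logConcave_support_convex hψw0 hψwlc
  rintro _ ⟨u, hu, rfl⟩ _ ⟨v, hv, rfl⟩ la lb hla hlb hab
  refine ⟨la • u + lb • v, hsupp hu hv hla hlb hab, ?_⟩
  have h1 : ∀ i : Fin τ, (A ^ (τ - 1 - (i : ℕ)) * B) *ᵥ (la • u + lb • v) i
      = la • ((A ^ (τ - 1 - (i : ℕ)) * B) *ᵥ u i) + lb • ((A ^ (τ - 1 - (i : ℕ)) * B) *ᵥ v i) := by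
    intro i
    simp only [Pi.add_apply, Pi.smul_apply]
    rw [Matrix.mulVec_add, Matrix.mulVec_smul, Matrix.mulVec_smul]
  simp only [hf, h1, Finset.sum_add_distrib, smul_add, Finset.smul_sum]
  nth_rewrite 1 [show (A ^ τ) *ᵥ x0 = la • ((A ^ τ) *ᵥ x0) + lb • ((A ^ τ) *ᵥ x0) by
    rw [← add_smul, hab, one_smul]]
  abel
end

section
/- The bivariate exponential density ψ_a(z₁, z₂) = λ_x λ_y e^{−λ_x z₁ − λ_y z₂} for z₁, z₂ ≥ 0 (and 0 otherwise), with λ_x, λ_y > 0, belongs to L¹(ℝ²) ∩ L²(ℝ²); moreover, for the double-integrator system x_G[t+1] = A x_G[t] + B a[t] on ℝ⁴ with A = I₂ ⊗ [[1, T_s],[0, 1]], B = I₂ ⊗ [T_s²/2, T_s]ᵀ, T_s > 0, fixed initial state x_G[0], and i.i.d. disturbances a[t] with density ψ_a, for every τ ≥ 2 the distribution of x_G[τ] is absolutely continuous with respect to Lebesgue measure on ℝ⁴ with a density in L¹(ℝ⁴) ∩ L²(ℝ⁴). -/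
open MeasureTheory Matrix ProbabilityTheory
open scoped ENNReal NNReal


-- 1-d exponential integrability
lemma aux_exp_fin (l c : ℝ) (hl : 0 < l) :
    ∫⁻ x : ℝ, ENNReal.ofReal (if 0 ≤ x then c * Real.exp (-(l*x)) else 0) < ⊤ := by
  have hint : Integrable (fun x : ℝ => if 0 ≤ x then c * Real.exp (-(l*x)) else 0) := by
    have h1 : IntegrableOn (fun x : ℝ => c * Real.exp (-(l*x))) (Set.Ici 0) := by
      have := (exp_neg_integrableOn_Ioi 0 hl).const_mul c
      exact Iff.mpr integrableOn_Ici_iff_integrableOn_Ioi (by simpa [IntegrableOn] using this)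
    have : Integrable (Set.indicator (Set.Ici 0) (fun x : ℝ => c * Real.exp (-(l*x)))) := by
      rwa [MeasureTheory.integrable_indicator_iff measurableSet_Ici]
    refine this.congr (Filter.Eventually.of_forall fun x => ?_)
    by_cases hx : (0:ℝ) ≤ x <;> simp [Set.indicator, hx]
  exact hint.lintegral_lt_top

lemma aux_prod_fin2 (l1 l2 c d : ℝ) (hl1 : 0 < l1) (hl2 : 0 < l2) :
    ∫⁻ z : Fin 2 → ℝ, (ENNReal.ofReal (if 0 ≤ z 0 then c * Real.exp (-(l1 * z 0)) else 0)) *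
      (ENNReal.ofReal (if 0 ≤ z 1 then d * Real.exp (-(l2 * z 1)) else 0)) < ⊤ := by
  have hmeas : ∀ (l c : ℝ), Measurable (fun x : ℝ =>
      ENNReal.ofReal (if 0 ≤ x then c * Real.exp (-(l * x)) else 0)) := by
    intro l c
    apply Measurable.ennreal_ofReal
    exact Measurable.ite measurableSet_Ici (by fun_prop) measurable_const
  have key := (volume_preserving_piFinTwo (fun _ : Fin 2 => ℝ)).lintegral_map_equiv
    (f := fun p : ℝ × ℝ => (ENNReal.ofReal (if 0 ≤ p.1 then c * Real.exp (-(l1 * p.1)) else 0)) *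
      (ENNReal.ofReal (if 0 ≤ p.2 then d * Real.exp (-(l2 * p.2)) else 0)))
  simp only [MeasurableEquiv.piFinTwo_apply] at key
  rw [show (∫⁻ z : Fin 2 → ℝ, (ENNReal.ofReal (if 0 ≤ z 0 then c * Real.exp (-(l1 * z 0)) else 0)) *
      (ENNReal.ofReal (if 0 ≤ z 1 then d * Real.exp (-(l2 * z 1)) else 0))) = _ from key.symm]
  rw [Measure.volume_eq_prod ℝ ℝ]
  rw [MeasureTheory.lintegral_prod_mul (f := fun x : ℝ =>
      ENNReal.ofReal (if 0 ≤ x then c * Real.exp (-(l1 * x)) else 0))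
    (g := fun x : ℝ => ENNReal.ofReal (if 0 ≤ x then d * Real.exp (-(l2 * x)) else 0))
    (hmeas l1 c).aemeasurable (hmeas l2 d).aemeasurable]
  exact ENNReal.mul_lt_top (aux_exp_fin l1 c hl1) (aux_exp_fin l2 d hl2)


lemma map_withDensity_equiv {α β : Type*} [MeasurableSpace α] [MeasurableSpace β]
    (e : α ≃ᵐ β) (μ : Measure α) (f : α → ℝ≥0∞) :
    Measure.map e (μ.withDensity f) = (Measure.map e μ).withDensity (fun y => f (e.symm y)) := by
  ext s hs
  rw [Measure.map_apply e.measurable hs, withDensity_apply _ (e.measurable hs),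
      withDensity_apply _ hs, ← lintegral_indicator (e.measurable hs) _,
      ← lintegral_indicator hs _, lintegral_map_equiv]
  congr 1
  ext x
  by_cases hx : e x ∈ s <;> simp [Set.indicator, hx]

lemma prod_withDensity {α β : Type*} [MeasurableSpace α] [MeasurableSpace β]
    (μ : Measure α) (ν : Measure β) [SFinite μ] [SFinite ν]
    {f : α → ℝ≥0∞} {g : β → ℝ≥0∞} (hf : Measurable f) (hg : Measurable g) :
    (μ.withDensity f).prod (ν.withDensity g)
      = (μ.prod ν).withDensity (fun p => f p.1 * g p.2) := by
  ext s hs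
  rw [Measure.prod_apply hs, withDensity_apply _ hs,
    lintegral_withDensity_eq_lintegral_mul μ hf
      (measurable_measure_prodMk_left (ν := ν.withDensity g) hs)]
  rw [← lintegral_indicator hs, lintegral_prod (s.indicator fun p : α × β => f p.1 * g p.2)
    ((((hf.comp measurable_fst).mul (hg.comp measurable_snd)).indicator hs).aemeasurable)]
  congr 1
  ext x
  rw [Pi.mul_apply, withDensity_apply _ (measurable_prodMk_left hs),
    ← lintegral_indicator (measurable_prodMk_left hs) _, ← lintegral_const_mul _ (hg.indicator (measurable_prodMk_left hs))]
  congr 1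
  ext y
  by_cases hxy : (x, y) ∈ s <;> simp [Set.indicator, hxy]

lemma sq_lintegral_le {α : Type*} [MeasurableSpace α] (ν : Measure α) [IsProbabilityMeasure ν]
    (g : α → ℝ≥0∞) (hg : Measurable g) :
    (∫⁻ z, g z ∂ν) ^ 2 ≤ ∫⁻ z, g z ^ 2 ∂ν := by
  have hconj : Real.HolderConjugate 2 2 := Real.HolderConjugate.two_two
  have h := ENNReal.lintegral_mul_le_Lp_mul_Lq ν hconj hg.aemeasurable
    (aemeasurable_const (b := (1:ℝ≥0∞)))
  simp only [mul_one, Pi.mul_apply] at h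
  have h1 : ∫⁻ _z, (1:ℝ≥0∞) ^ (2:ℝ) ∂ν = 1 := by simp
  rw [h1, ENNReal.one_rpow, mul_one] at h
  calc (∫⁻ z, g z ∂ν) ^ 2 ≤ ((∫⁻ z, g z ^ (2:ℝ) ∂ν) ^ (1/(2:ℝ))) ^ 2 := by
        exact pow_le_pow_left' h 2
    _ = ∫⁻ z, g z ^ 2 ∂ν := by
        rw [← ENNReal.rpow_natCast (((∫⁻ z, g z ^ (2:ℝ) ∂ν) ^ (1/(2:ℝ)))) 2,
          ← ENNReal.rpow_mul]
        norm_num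

section Conv
variable {Ω : Type*} [MeasurableSpace Ω]

lemma conv_lemma (P : Measure Ω) [IsProbabilityMeasure P]
    (S V : Ω → (Fin 4 → ℝ)) (hS : Measurable S) (hV : Measurable V)
    (hindep : IndepFun S V P)
    (H : (Fin 4 → ℝ) → ℝ≥0∞) (hH : Measurable H)
    (hlaw : Measure.map S P = (volume : Measure (Fin 4 → ℝ)).withDensity H) :
    Measure.map (fun ω => S ω + V ω) P
      = (volume : Measure (Fin 4 → ℝ)).withDensity
          (fun y => ∫⁻ z, H (y - z) ∂(Measure.map V P)) := by
  set ν := Measure.map V P with hν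
  haveI : IsProbabilityMeasure ν := Measure.isProbabilityMeasure_map hV.aemeasurable
  haveI : IsProbabilityMeasure (Measure.map S P) := Measure.isProbabilityMeasure_map hS.aemeasurable
  have hpair : Measure.map (fun ω => (S ω, V ω)) P = (Measure.map S P).prod ν :=
    (indepFun_iff_map_prod_eq_prod_map_map hS.aemeasurable hV.aemeasurable).1 hindep
  have haddm : Measurable (fun p : (Fin 4 → ℝ) × (Fin 4 → ℝ) => p.1 + p.2) :=
    measurable_fst.add measurable_snd
  have hmapadd : Measure.map (fun ω => S ω + V ω) P
      = Measure.map (fun p : (Fin 4 → ℝ) × (Fin 4 → ℝ) => p.1 + p.2)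
          ((Measure.map S P).prod ν) := by
    rw [← hpair, Measure.map_map haddm (hS.prodMk hV)]
    rfl
  rw [hmapadd, hlaw]
  ext s hs
  rw [Measure.map_apply haddm hs, Measure.prod_apply_symm (haddm hs),
    withDensity_apply _ hs]
  have inner : ∀ z : Fin 4 → ℝ,
      ((volume : Measure (Fin 4 → ℝ)).withDensity H) ((fun w => (w, z)) ⁻¹'
        ((fun p : (Fin 4 → ℝ) × (Fin 4 → ℝ) => p.1 + p.2) ⁻¹' s))
      = ∫⁻ y, s.indicator (fun y => H (y - z)) y := by
    intro z
    have hpre : MeasurableSet ((fun w : Fin 4 → ℝ => w + z) ⁻¹' s) :=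
      (measurable_add_const z) hs
    have hset : ((fun w : Fin 4 → ℝ => (w, z)) ⁻¹'
        ((fun p : (Fin 4 → ℝ) × (Fin 4 → ℝ) => p.1 + p.2) ⁻¹' s))
        = (fun w : Fin 4 → ℝ => w + z) ⁻¹' s := rfl
    rw [hset, withDensity_apply _ hpre, ← lintegral_indicator hpre _,
      ← lintegral_add_right_eq_self (μ := (volume : Measure (Fin 4 → ℝ)))
        (f := fun y => s.indicator (fun y => H (y - z)) y) z]
    congr 1
    ext w
    by_cases hw : w + z ∈ s <;> simp [Set.indicator, hw]
  simp_rw [inner]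
  have hK : Measurable (fun p : (Fin 4 → ℝ) × (Fin 4 → ℝ) =>
      s.indicator (fun y => H (y - p.1)) p.2) := by
    have : (fun p : (Fin 4 → ℝ) × (Fin 4 → ℝ) =>
        s.indicator (fun y => H (y - p.1)) p.2)
        = fun p => s.indicator (fun _ => (1:ℝ≥0∞)) p.2 * H (p.2 - p.1) := by
      ext p
      by_cases hp : p.2 ∈ s <;> simp [Set.indicator, hp]
    rw [this]
    exact ((measurable_const.indicator hs).comp measurable_snd).mul
      (hH.comp (measurable_snd.sub measurable_fst))
  rw [lintegral_lintegral_swap hK.aemeasurable]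
  rw [← lintegral_indicator hs _]
  congr 1
  ext y
  by_cases hy : y ∈ s <;> simp [Set.indicator, hy]

lemma conv_l1 (ν : Measure (Fin 4 → ℝ)) [IsProbabilityMeasure ν]
    (H : (Fin 4 → ℝ) → ℝ≥0∞) (hH : Measurable H) :
    ∫⁻ y, (∫⁻ z, H (y - z) ∂ν) ∂(volume : Measure (Fin 4 → ℝ))
      = ∫⁻ w, H w ∂(volume : Measure (Fin 4 → ℝ)) := by
  have hK : Measurable (fun p : (Fin 4 → ℝ) × (Fin 4 → ℝ) => H (p.2 - p.1)) :=
    hH.comp (measurable_snd.sub measurable_fst)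
  rw [← lintegral_lintegral_swap hK.aemeasurable]
  have : ∀ z, ∫⁻ y, H (y - z) ∂(volume : Measure (Fin 4 → ℝ)) = ∫⁻ w, H w := fun z =>
    lintegral_sub_right_eq_self H z
  simp_rw [this, lintegral_const, measure_univ, mul_one]

lemma conv_l2 (ν : Measure (Fin 4 → ℝ)) [IsProbabilityMeasure ν]
    (H : (Fin 4 → ℝ) → ℝ≥0∞) (hH : Measurable H) :
    ∫⁻ y, (∫⁻ z, H (y - z) ∂ν) ^ 2 ∂(volume : Measure (Fin 4 → ℝ))
      ≤ ∫⁻ w, H w ^ 2 ∂(volume : Measure (Fin 4 → ℝ)) := by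
  have step1 : ∀ y, (∫⁻ z, H (y - z) ∂ν) ^ 2 ≤ ∫⁻ z, H (y - z) ^ 2 ∂ν := fun y =>
    sq_lintegral_le ν _ (hH.comp (measurable_const.sub measurable_id))
  calc ∫⁻ y, (∫⁻ z, H (y - z) ∂ν) ^ 2 ∂(volume : Measure (Fin 4 → ℝ))
      ≤ ∫⁻ y, ∫⁻ z, H (y - z) ^ 2 ∂ν ∂(volume : Measure (Fin 4 → ℝ)) :=
        lintegral_mono step1
    _ = ∫⁻ w, H w ^ 2 ∂(volume : Measure (Fin 4 → ℝ)) :=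
        conv_l1 ν (fun w => H w ^ 2) (hH.pow_const 2)

end Conv

lemma memLp_of_lintegral {α : Type*} [MeasurableSpace α] (μ : Measure α)
    (g : α → ℝ≥0∞) (hg : Measurable g)
    (h1 : ∫⁻ y, g y ∂μ < ⊤) (h2 : ∫⁻ y, (g y) ^ 2 ∂μ < ⊤) :
    MemLp (fun y => (g y).toReal) 1 μ ∧ MemLp (fun y => (g y).toReal) 2 μ := by
  have hmeas : AEStronglyMeasurable (fun y => (g y).toReal) μ :=
    hg.ennreal_toReal.aestronglyMeasurable
  have hb : ∀ y, ‖(g y).toReal‖ₑ ≤ g y := fun y => by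
    rw [Real.enorm_eq_ofReal ENNReal.toReal_nonneg]
    exact ENNReal.ofReal_toReal_le
  constructor
  · refine ⟨hmeas, ?_⟩
    rw [eLpNorm_one_eq_lintegral_enorm]
    exact lt_of_le_of_lt (lintegral_mono hb) h1
  · refine ⟨hmeas, ?_⟩
    rw [eLpNorm_eq_lintegral_rpow_enorm_toReal (by norm_num) (by norm_num)]
    have hbound : ∫⁻ y, ‖(g y).toReal‖ₑ ^ (ENNReal.toReal 2) ∂μ
        ≤ ∫⁻ y, (g y) ^ 2 ∂μ := by
      refine lintegral_mono fun y => ?_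
      have : ((2:ℝ≥0∞)).toReal = ((2:ℕ):ℝ) := by norm_num
      rw [this, ENNReal.rpow_natCast]
      exact pow_le_pow_left' (hb y) 2
    refine ENNReal.rpow_lt_top_of_nonneg (by positivity) ?_
    exact (lt_of_le_of_lt hbound h2).ne

lemma map_le_eq_smul (Le : ((Fin 2 → ℝ) × (Fin 2 → ℝ)) ≃ₗ[ℝ] (Fin 4 → ℝ)) :
    ∃ c : ℝ≥0, Measure.map Le (volume : Measure ((Fin 2 → ℝ) × (Fin 2 → ℝ)))
      = c • (volume : Measure (Fin 4 → ℝ)) := by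
  haveI : (volume : Measure ((Fin 2 → ℝ) × (Fin 2 → ℝ))).IsAddHaarMeasure := by
    rw [Measure.volume_eq_prod]; exact Measure.prod.instIsAddHaarMeasure _ _
  haveI : (Measure.map Le (volume : Measure ((Fin 2 → ℝ) × (Fin 2 → ℝ)))).IsAddHaarMeasure :=
    Measure.MapLinearEquiv.isAddHaarMeasure _ Le
  exact ⟨_, Measure.isAddLeftInvariant_eq_smul _ _⟩

lemma map_le_symm_eq_smul (Le : (Fin 4 → ℝ) ≃ₗ[ℝ] ((Fin 2 → ℝ) × (Fin 2 → ℝ))) :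
    ∃ c : ℝ≥0, Measure.map Le (volume : Measure (Fin 4 → ℝ))
      = c • (volume : Measure ((Fin 2 → ℝ) × (Fin 2 → ℝ))) := by
  haveI : (Measure.map Le (volume : Measure (Fin 4 → ℝ))).IsAddHaarMeasure :=
    Measure.MapLinearEquiv.isAddHaarMeasure _ Le
  haveI : (volume : Measure ((Fin 2 → ℝ) × (Fin 2 → ℝ))).IsAddHaarMeasure := by
    rw [Measure.volume_eq_prod]; exact Measure.prod.instIsAddHaarMeasure _ _
  exact ⟨_, Measure.isAddLeftInvariant_eq_smul _ _⟩

lemma aux_inj (Ts : ℝ) (hTs : 0 < Ts) (p : (Fin 2 → ℝ) × (Fin 2 → ℝ))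
    (hp : (!![1, Ts, 0, 0; 0, 1, 0, 0; 0, 0, 1, Ts; 0, 0, 0, 1] * !![Ts ^ 2 / 2, 0; Ts, 0; 0, Ts ^ 2 / 2; 0, Ts]) *ᵥ p.1 + !![Ts ^ 2 / 2, 0; Ts, 0; 0, Ts ^ 2 / 2; 0, Ts] *ᵥ p.2 = 0) :
    p = 0 := by
  have hTs0 : Ts ≠ 0 := ne_of_gt hTs
  have h0 := congrFun hp 0
  have h1 := congrFun hp 1
  have h2 := congrFun hp 2
  have h3 := congrFun hp 3
  simp [Matrix.mulVec, dotProduct, Matrix.mul_apply, Fin.sum_univ_four,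
    Fin.sum_univ_two] at h0 h1 h2 h3
  have e1 : p.1 0 + p.2 0 = 0 := by
    rcases mul_eq_zero.mp (show Ts * (p.1 0 + p.2 0) = 0 by linarith) with h | h
    · exact absurd h hTs0
    · exact h
  have e3 : p.1 1 + p.2 1 = 0 := by
    rcases mul_eq_zero.mp (show Ts * (p.1 1 + p.2 1) = 0 by linarith) with h | h
    · exact absurd h hTs0
    · exact h
  have hTs2 : Ts ^ 2 ≠ 0 := pow_ne_zero 2 hTs0
  have e0 : 3 * p.1 0 + p.2 0 = 0 := by
    rcases mul_eq_zero.mp (show Ts ^ 2 * (3 * p.1 0 + p.2 0) = 0 by nlinarith) with h | h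
    · exact absurd h hTs2
    · exact h
  have e2 : 3 * p.1 1 + p.2 1 = 0 := by
    rcases mul_eq_zero.mp (show Ts ^ 2 * (3 * p.1 1 + p.2 1) = 0 by nlinarith) with h | h
    · exact absurd h hTs2
    · exact h
  have hu0 : p.1 0 = 0 := by linarith
  have hu1 : p.1 1 = 0 := by linarith
  have hv0 : p.2 0 = 0 := by linarith
  have hv1 : p.2 1 = 0 := by linarith
  refine Prod.ext ?_ ?_
  · funext i; fin_cases i <;> assumption
  · funext i; fin_cases i <;> assumption

/-- **Square-integrability of the bivariate exponential density and of the
forward stochastic reach probability density of the double integrator.**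
The density `ψ_a(z₁,z₂) = λx λy e^{−λx z₁ − λy z₂}` (on the nonnegative
quadrant, `0` otherwise) is in `L¹(ℝ²) ∩ L²(ℝ²)`, and for the double
integrator `x_G[t+1] = A x_G[t] + B a[t]` driven by i.i.d. disturbances with
density `ψ_a`, the distribution of `x_G[τ]` is, for every `τ ≥ 2`, absolutely
continuous with a density in `L¹(ℝ⁴) ∩ L²(ℝ⁴)`. -/
theorem fsrpd_double_integrator_L1_L2
    {Ω : Type*} [MeasurableSpace Ω] (P : Measure Ω) [IsProbabilityMeasure P]
    (Ts : ℝ) (hTs : 0 < Ts)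
    (A : Matrix (Fin 4) (Fin 4) ℝ)
    (hA : A = !![1, Ts, 0, 0; 0, 1, 0, 0; 0, 0, 1, Ts; 0, 0, 0, 1])
    (B : Matrix (Fin 4) (Fin 2) ℝ)
    (hB : B = !![Ts ^ 2 / 2, 0; Ts, 0; 0, Ts ^ 2 / 2; 0, Ts])
    (xG0 : Fin 4 → ℝ)
    (lx ly : ℝ) (hlx : 0 < lx) (hly : 0 < ly)
    (ψa : (Fin 2 → ℝ) → ℝ)
    (hψa : ∀ z, ψa z = if 0 ≤ z 0 ∧ 0 ≤ z 1 then
        lx * ly * Real.exp (-(lx * z 0) - ly * z 1) else 0)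
    (a : ℕ → Ω → (Fin 2 → ℝ))
    (hameas : ∀ t, Measurable (a t))
    (haindep : iIndepFun a P)
    (hadens : ∀ t, Measure.map (a t) P
        = (volume : Measure (Fin 2 → ℝ)).withDensity (fun z => ENNReal.ofReal (ψa z)))
    (x : ℕ → Ω → (Fin 4 → ℝ))
    (hx0 : ∀ ω, x 0 ω = xG0)
    (hxrec : ∀ t ω, x (t + 1) ω = A *ᵥ x t ω + B *ᵥ a t ω) :
    (MemLp ψa 1 (volume : Measure (Fin 2 → ℝ))
        ∧ MemLp ψa 2 (volume : Measure (Fin 2 → ℝ)))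
      ∧ ∀ τ : ℕ, 2 ≤ τ → ∃ f : (Fin 4 → ℝ) → ℝ,
          (∀ y, 0 ≤ f y) ∧
          Measure.map (x τ) P
            = (volume : Measure (Fin 4 → ℝ)).withDensity (fun y => ENNReal.ofReal (f y)) ∧
          MemLp f 1 (volume : Measure (Fin 4 → ℝ))
            ∧ MemLp f 2 (volume : Measure (Fin 4 → ℝ)) := by
  have hψa_nonneg : ∀ z, 0 ≤ ψa z := fun z => by rw [hψa]; positivity
  have hψm : Measurable ψa := by
    have hfun : ψa = fun z => if 0 ≤ z 0 ∧ 0 ≤ z 1 then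
        lx * ly * Real.exp (-(lx * z 0) - ly * z 1) else 0 := funext hψa
    rw [hfun]
    have hset : MeasurableSet {z : Fin 2 → ℝ | 0 ≤ z 0 ∧ 0 ≤ z 1} :=
      ((measurableSet_le measurable_const (measurable_pi_apply 0)).inter
        (measurableSet_le measurable_const (measurable_pi_apply 1)))
    exact Measurable.ite hset (by fun_prop) measurable_const
  set Ga : (Fin 2 → ℝ) → ℝ≥0∞ := fun z => ENNReal.ofReal (ψa z) with hGa
  have hGam : Measurable Ga := hψm.ennreal_ofReal
  have hsplit : ∀ z : Fin 2 → ℝ, Ga z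
      = ENNReal.ofReal (if 0 ≤ z 0 then lx * Real.exp (-(lx * z 0)) else 0)
        * ENNReal.ofReal (if 0 ≤ z 1 then ly * Real.exp (-(ly * z 1)) else 0) := by
    intro z
    rw [hGa]
    simp only [hψa z]
    by_cases h0 : 0 ≤ z 0 <;> by_cases h1 : 0 ≤ z 1 <;> simp [h0, h1]
    rw [← ENNReal.ofReal_mul (by positivity)]
    congr 1
    rw [show -(lx * z 0) - ly * z 1 = (-(lx * z 0)) + (-(ly * z 1)) by ring, Real.exp_add]
    ring
  have hsq : ∀ z : Fin 2 → ℝ, Ga z ^ 2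
      = ENNReal.ofReal (if 0 ≤ z 0 then lx ^ 2 * Real.exp (-(2 * lx * z 0)) else 0)
        * ENNReal.ofReal (if 0 ≤ z 1 then ly ^ 2 * Real.exp (-(2 * ly * z 1)) else 0) := by
    intro z
    rw [hsplit z, mul_pow, ← ENNReal.ofReal_pow (by positivity),
      ← ENNReal.ofReal_pow (by positivity)]
    congr 2
    · by_cases h0 : 0 ≤ z 0
      · simp only [h0, if_true]
        rw [mul_pow, show -(2 * lx * z 0) = (-(lx * z 0)) + (-(lx * z 0)) by ring, Real.exp_add]
        ring
      · simp [h0]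
    · by_cases h1 : 0 ≤ z 1
      · simp only [h1, if_true]
        rw [mul_pow, show -(2 * ly * z 1) = (-(ly * z 1)) + (-(ly * z 1)) by ring, Real.exp_add]
        ring
      · simp [h1]
  have hI1 : ∫⁻ z, Ga z ∂(volume : Measure (Fin 2 → ℝ)) < ⊤ := by
    simp_rw [hsplit]
    exact aux_prod_fin2 lx ly lx ly hlx hly
  have hI2 : ∫⁻ z, Ga z ^ 2 ∂(volume : Measure (Fin 2 → ℝ)) < ⊤ := by
    simp_rw [hsq]
    exact aux_prod_fin2 (2 * lx) (2 * ly) (lx ^ 2) (ly ^ 2) (by positivity) (by positivity)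
  have hmem := memLp_of_lintegral volume Ga hGam hI1 hI2
  have hψa_eq : ψa = fun z => (Ga z).toReal := by
    funext z
    simp [hGa, ENNReal.toReal_ofReal (hψa_nonneg z)]
  refine ⟨⟨by rw [hψa_eq]; exact hmem.1, by rw [hψa_eq]; exact hmem.2⟩, ?_⟩
  intro τ hτ
  obtain ⟨k, rfl⟩ : ∃ k, τ = k + 2 := ⟨τ - 2, by omega⟩
  -- measurability of the linear maps
  have hAm : Measurable (fun v : Fin 4 → ℝ => A *ᵥ v) := by
    have : Continuous (fun v : Fin 4 → ℝ => A *ᵥ v) := by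
      exact A.mulVecLin.continuous_of_finiteDimensional
    exact this.measurable
  have hBm : Measurable (fun u : Fin 2 → ℝ => B *ᵥ u) := by
    have : Continuous (fun u : Fin 2 → ℝ => B *ᵥ u) := by
      exact B.mulVecLin.continuous_of_finiteDimensional
    exact this.measurable
  -- representation of `x t` as a function of the noises
  have hxrep : ∀ t, ∃ F : (Fin t → (Fin 2 → ℝ)) → (Fin 4 → ℝ),
      Measurable F ∧ ∀ ω, x t ω = F (fun i => a i ω) := by
    intro t
    induction t with
    | zero => exact ⟨fun _ => xG0, measurable_const, fun ω => hx0 ω⟩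
    | succ n ih =>
      obtain ⟨F, hF, hFx⟩ := ih
      refine ⟨fun g => A *ᵥ F (fun i => g i.castSucc) + B *ᵥ g (Fin.last n), ?_, ?_⟩
      · exact (hAm.comp (hF.comp (measurable_pi_lambda _ fun i =>
          measurable_pi_apply _))).add (hBm.comp (measurable_pi_apply _))
      · intro ω
        rw [hxrec n ω, hFx ω]
        simp [Fin.coe_castSucc, Fin.val_last]
  have hxmeas : ∀ t, Measurable (x t) := by
    intro t
    obtain ⟨F, hF, hFx⟩ := hxrep t
    have : x t = fun ω => F (fun i => a i ω) := funext hFx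
    rw [this]
    exact hF.comp (measurable_pi_lambda _ fun i => hameas i)
  -- the linear equivalence
  have hTs0 : Ts ≠ 0 := ne_of_gt hTs
  set L : ((Fin 2 → ℝ) × (Fin 2 → ℝ)) →ₗ[ℝ] (Fin 4 → ℝ) :=
    ((A * B).mulVecLin.comp (LinearMap.fst ℝ _ _))
      + (B.mulVecLin.comp (LinearMap.snd ℝ _ _)) with hLdef
  have hLapp : ∀ p : (Fin 2 → ℝ) × (Fin 2 → ℝ), L p = (A * B) *ᵥ p.1 + B *ᵥ p.2 :=
    fun p => rfl
  have hLinj : Function.Injective L := by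
    refine (injective_iff_map_eq_zero L).2 fun p hp => ?_
    rw [hLapp p, hA, hB] at hp
    exact aux_inj Ts hTs p hp
  have hfr : Module.finrank ℝ ((Fin 2 → ℝ) × (Fin 2 → ℝ)) = Module.finrank ℝ (Fin 4 → ℝ) := by
    simp [Module.finrank_prod, Module.finrank_pi]
  set Le : ((Fin 2 → ℝ) × (Fin 2 → ℝ)) ≃ₗ[ℝ] (Fin 4 → ℝ) :=
    LinearMap.linearEquivOfInjective L hLinj hfr with hLedef
  set Φ : ((Fin 2 → ℝ) × (Fin 2 → ℝ)) ≃ᵐ (Fin 4 → ℝ) :=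
    Le.toContinuousLinearEquiv.toHomeomorph.toMeasurableEquiv with hΦdef
  have hΦapp : ∀ p, Φ p = (A * B) *ᵥ p.1 + B *ᵥ p.2 := fun p => hLapp p
  have hΦcoe : ⇑Φ = ⇑Le := rfl
  have hΦsymmcoe : ⇑Φ.symm = ⇑Le.symm := rfl
  -- independence of the last two noises from the past state
  have hindepPX : IndepFun (fun ω => (a k ω, a (k + 1) ω)) (x k) P := by
    obtain ⟨F, hF, hFx⟩ := hxrep k
    have hdis : Disjoint ({k, k + 1} : Finset ℕ) (Finset.range k) := by
      simp only [Finset.disjoint_left, Finset.mem_insert, Finset.mem_singleton,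
        Finset.mem_range]
      omega
    have hbase := haindep.indepFun_finset ({k, k + 1} : Finset ℕ) (Finset.range k) hdis hameas
    have hk1 : k ∈ ({k, k + 1} : Finset ℕ) := by simp
    have hk2 : k + 1 ∈ ({k, k + 1} : Finset ℕ) := by simp
    have hφm : Measurable (fun t : (({k, k + 1} : Finset ℕ) : Type) → (Fin 2 → ℝ) =>
        (t ⟨k, hk1⟩, t ⟨k + 1, hk2⟩)) :=
      (measurable_pi_apply _).prodMk (measurable_pi_apply _)
    have hψm' : Measurable (fun t : ((Finset.range k : Finset ℕ) : Type) → (Fin 2 → ℝ) =>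
        F (fun i : Fin k => t ⟨(i : ℕ), by simp [Finset.mem_range, i.isLt]⟩)) :=
      hF.comp (measurable_pi_lambda _ fun i => measurable_pi_apply _)
    have hcomp := hbase.comp hφm hψm'
    have heq1 : ((fun t : (({k, k + 1} : Finset ℕ) : Type) → (Fin 2 → ℝ) =>
        (t ⟨k, hk1⟩, t ⟨k + 1, hk2⟩)) ∘ (fun ω (i : ({k, k + 1} : Finset ℕ)) => a i ω))
        = fun ω => (a k ω, a (k + 1) ω) := rfl
    have heq2 : ((fun t : ((Finset.range k : Finset ℕ) : Type) → (Fin 2 → ℝ) =>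
        F (fun i : Fin k => t ⟨(i : ℕ), by simp [Finset.mem_range, i.isLt]⟩))
          ∘ (fun ω (i : (Finset.range k : Finset ℕ)) => a i ω))
        = x k := by
      funext ω
      exact (hFx ω).symm
    rwa [heq1, heq2] at hcomp
  -- joint law of the two noises
  have hmap_pair : Measure.map (fun ω => (a k ω, a (k + 1) ω)) P
      = ((volume : Measure (Fin 2 → ℝ)).withDensity Ga).prod
          ((volume : Measure (Fin 2 → ℝ)).withDensity Ga) := by
    rw [(indepFun_iff_map_prod_eq_prod_map_map (hameas k).aemeasurable
      (hameas (k + 1)).aemeasurable).1 (haindep.indepFun (by omega)),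
      hadens k, hadens (k + 1)]
  have hprodG : ((volume : Measure (Fin 2 → ℝ)).withDensity Ga).prod
        ((volume : Measure (Fin 2 → ℝ)).withDensity Ga)
      = (volume : Measure ((Fin 2 → ℝ) × (Fin 2 → ℝ))).withDensity
          (fun p => Ga p.1 * Ga p.2) := by
    rw [prod_withDensity _ _ hGam hGam, ← Measure.volume_eq_prod]
  obtain ⟨c, hc⟩ := map_le_eq_smul Le
  obtain ⟨c', hc'⟩ := map_le_symm_eq_smul Le.symm
  set G2 : ((Fin 2 → ℝ) × (Fin 2 → ℝ)) → ℝ≥0∞ := fun p => Ga p.1 * Ga p.2 with hG2def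
  have hG2m : Measurable G2 := (hGam.comp measurable_fst).mul (hGam.comp measurable_snd)
  set H : (Fin 4 → ℝ) → ℝ≥0∞ := fun y => (c : ℝ≥0∞) * G2 (Φ.symm y) with hHdef
  have hHm : Measurable H := measurable_const.mul (hG2m.comp Φ.symm.measurable)
  -- the law of S
  set S : Ω → Fin 4 → ℝ := fun ω => Φ (a k ω, a (k + 1) ω) with hSdef
  have hSm : Measurable S := Φ.measurable.comp ((hameas k).prodMk (hameas (k + 1)))
  have hSlaw : Measure.map S P = (volume : Measure (Fin 4 → ℝ)).withDensity H := by
    have hstep : Measure.map S P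
        = Measure.map Φ (Measure.map (fun ω => (a k ω, a (k + 1) ω)) P) := by
      rw [Measure.map_map Φ.measurable ((hameas k).prodMk (hameas (k + 1)))]
      rfl
    rw [hstep, hmap_pair, hprodG, map_withDensity_equiv Φ _ _]
    have hmapvol : Measure.map (⇑Φ) (volume : Measure ((Fin 2 → ℝ) × (Fin 2 → ℝ)))
        = (c : ℝ≥0∞) • (volume : Measure (Fin 4 → ℝ)) := by
      rw [hΦcoe, hc]
      rfl
    rw [hmapvol, withDensity_smul_measure, ← withDensity_smul' (c : ℝ≥0∞) _ ENNReal.coe_ne_top]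
    rfl
  -- integrability of H
  have hchange : ∀ g : ((Fin 2 → ℝ) × (Fin 2 → ℝ)) → ℝ≥0∞,
      ∫⁻ y, g (Φ.symm y) ∂(volume : Measure (Fin 4 → ℝ))
        = (c' : ℝ≥0∞) * ∫⁻ p, g p ∂(volume : Measure ((Fin 2 → ℝ) × (Fin 2 → ℝ))) := by
    intro g
    rw [← lintegral_map_equiv g Φ.symm]
    have : Measure.map (⇑Φ.symm) (volume : Measure (Fin 4 → ℝ))
        = (c' : ℝ≥0∞) • (volume : Measure ((Fin 2 → ℝ) × (Fin 2 → ℝ))) := by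
      rw [hΦsymmcoe, hc']
      rfl
    rw [this, lintegral_smul_measure, smul_eq_mul]
  have hintG2 : ∫⁻ p, G2 p ∂(volume : Measure ((Fin 2 → ℝ) × (Fin 2 → ℝ)))
      = (∫⁻ z, Ga z ∂(volume : Measure (Fin 2 → ℝ)))
        * (∫⁻ z, Ga z ∂(volume : Measure (Fin 2 → ℝ))) := by
    rw [Measure.volume_eq_prod]
    exact lintegral_prod_mul hGam.aemeasurable hGam.aemeasurable
  have hintG2sq : ∫⁻ p, G2 p ^ 2 ∂(volume : Measure ((Fin 2 → ℝ) × (Fin 2 → ℝ)))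
      = (∫⁻ z, Ga z ^ 2 ∂(volume : Measure (Fin 2 → ℝ)))
        * (∫⁻ z, Ga z ^ 2 ∂(volume : Measure (Fin 2 → ℝ))) := by
    rw [Measure.volume_eq_prod]
    have : ∀ p : (Fin 2 → ℝ) × (Fin 2 → ℝ), G2 p ^ 2 = (Ga p.1) ^ 2 * (Ga p.2) ^ 2 :=
      fun p => by rw [hG2def]; ring
    simp_rw [this]
    exact lintegral_prod_mul (hGam.pow_const 2).aemeasurable (hGam.pow_const 2).aemeasurable
  have hintH1 : ∫⁻ w, H w ∂(volume : Measure (Fin 4 → ℝ)) < ⊤ := by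
    simp_rw [hHdef]
    rw [lintegral_const_mul _ (show Measurable fun y => G2 (Φ.symm y) from hG2m.comp Φ.symm.measurable), hchange G2, hintG2]
    exact ENNReal.mul_lt_top ENNReal.coe_lt_top
      (ENNReal.mul_lt_top ENNReal.coe_lt_top (ENNReal.mul_lt_top hI1 hI1))
  have hintH2 : ∫⁻ w, H w ^ 2 ∂(volume : Measure (Fin 4 → ℝ)) < ⊤ := by
    have hHsq : ∀ w, H w ^ 2 = ((c : ℝ≥0∞)) ^ 2 * (fun p => G2 p ^ 2) (Φ.symm w) :=
      fun w => by rw [hHdef]; ring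
    simp_rw [hHsq]
    rw [lintegral_const_mul _ (show Measurable fun y => G2 (Φ.symm y) ^ 2 from
        (hG2m.comp Φ.symm.measurable).pow_const 2),
      hchange (fun p => G2 p ^ 2), hintG2sq]
    exact ENNReal.mul_lt_top (by simp [ENNReal.pow_lt_top ENNReal.coe_lt_top])
      (ENNReal.mul_lt_top ENNReal.coe_lt_top (ENNReal.mul_lt_top hI2 hI2))
  -- the independent remainder
  set V : Ω → Fin 4 → ℝ := fun ω => A *ᵥ (A *ᵥ x k ω) with hVdef
  have hVm : Measurable V := hAm.comp (hAm.comp (hxmeas k))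
  have hindepSV : IndepFun S V P :=
    hindepPX.comp Φ.measurable (hAm.comp hAm)
  have hdecomp : (fun ω => S ω + V ω) = x (k + 2) := by
    funext ω
    rw [hxrec (k + 1) ω, hxrec k ω]
    have hs : S ω = (A * B) *ᵥ a k ω + B *ᵥ a (k + 1) ω := hΦapp _
    rw [hs, hVdef]
    simp only [Matrix.mulVec_add, ← Matrix.mulVec_mulVec]
    abel
  set ν : Measure (Fin 4 → ℝ) := Measure.map V P with hνdef
  haveI : IsProbabilityMeasure ν := Measure.isProbabilityMeasure_map hVm.aemeasurable
  have hconv : Measure.map (x (k + 2)) P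
      = (volume : Measure (Fin 4 → ℝ)).withDensity (fun y => ∫⁻ z, H (y - z) ∂ν) := by
    rw [← hdecomp]
    exact conv_lemma P S V hSm hVm hindepSV H hHm hSlaw
  set fE : (Fin 4 → ℝ) → ℝ≥0∞ := fun y => ∫⁻ z, H (y - z) ∂ν with hfEdef
  have hfEm : Measurable fE := by
    refine Measurable.lintegral_prod_right ?_
    exact hHm.comp (measurable_fst.sub measurable_snd)
  have hfE1 : ∫⁻ y, fE y ∂(volume : Measure (Fin 4 → ℝ)) < ⊤ := by
    rw [hfEdef]
    simpa [conv_l1 ν H hHm] using hintH1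
  have hfE2 : ∫⁻ y, fE y ^ 2 ∂(volume : Measure (Fin 4 → ℝ)) < ⊤ := by
    rw [hfEdef]
    exact lt_of_le_of_lt (conv_l2 ν H hHm) hintH2
  have hmemf := memLp_of_lintegral volume fE hfEm hfE1 hfE2
  refine ⟨fun y => (fE y).toReal, fun y => ENNReal.toReal_nonneg, ?_, hmemf⟩
  rw [hconv]
  refine (withDensity_congr_ae ?_).symm
  filter_upwards [ae_lt_top hfEm hfE1.ne] with y hy
  rw [ENNReal.ofReal_toReal hy.ne]
end
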